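/- Let G be a strongly connected signed digraph with mirror adjacency matrix Â = (W·A + Aᵀ·W)/2. Then the mirror signed graph has the same sign pattern as G in the following sense: there exists a gauge transformation D such that every entry of D·Â·D is nonnegative if and only if there exists a gauge transformation D such that every entry of D·A·D is nonnegative (i.e., the mirror signed graph is structurally balanced if and only if G is structurally balanced, and structurally unbalanced if and only if G is structurally unbalanced). -/

import Mathlib

open Matrix BigOperators Filter

/-- In-degree of node `i`: sum of absolute values of the `i`-th row of `A`. -/
noncomputable def inDeg {n : ℕ} (A : Matrix (Fin n) (Fin n) ℝ) (i : Fin n) : ℝ := ∑ j, |A i j|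

/-- Laplacian `L = Δ − A` of the signed digraph with adjacency matrix `A`. -/
noncomputable def lapOf {n : ℕ} (A : Matrix (Fin n) (Fin n) ℝ) : Matrix (Fin n) (Fin n) ℝ :=
  Matrix.diagonal (inDeg A) - A

/-- Laplacian `L̄ = Δ − Ā` of the induced unsigned digraph. -/
noncomputable def lapBar {n : ℕ} (A : Matrix (Fin n) (Fin n) ℝ) : Matrix (Fin n) (Fin n) ℝ :=
  Matrix.diagonal (inDeg A) - Matrix.of (fun i j => |A i j|)

/-- `det(L̄_ii)`: determinant of `L̄` with its `i`-th row and column removed. -/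
noncomputable def minorDet {n : ℕ} (A : Matrix (Fin n) (Fin n) ℝ) (i : Fin n) : ℝ :=
  Matrix.det ((lapBar A).submatrix (fun k : {j : Fin n // j ≠ i} => (k : Fin n))
    (fun k : {j : Fin n // j ≠ i} => (k : Fin n)))

/-- `W = diag(det(L̄_11), …, det(L̄_nn))`. -/
noncomputable def Wmat {n : ℕ} (A : Matrix (Fin n) (Fin n) ℝ) : Matrix (Fin n) (Fin n) ℝ :=
  Matrix.diagonal (minorDet A)

/-- Mirror adjacency matrix `Â = (W·A + Aᵀ·W)/2`. -/
noncomputable def mirrorAdj {n : ℕ} (A : Matrix (Fin n) (Fin n) ℝ) : Matrix (Fin n) (Fin n) ℝ :=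
  (1/2 : ℝ) • (Wmat A * A + Aᵀ * Wmat A)

/-- Mirror Laplacian `L̂ = (W·L + Lᵀ·W)/2`. -/
noncomputable def mirrorLap {n : ℕ} (A : Matrix (Fin n) (Fin n) ℝ) : Matrix (Fin n) (Fin n) ℝ :=
  (1/2 : ℝ) • (Wmat A * lapOf A + (lapOf A)ᵀ * Wmat A)

/-- `(j, i)` is a directed edge when `a_ij ≠ 0`; strong connectivity: a directed
path between every ordered pair of distinct nodes. -/
def StronglyConnected {n : ℕ} (A : Matrix (Fin n) (Fin n) ℝ) : Prop :=
  ∀ i j : Fin n, i ≠ j → Relation.TransGen (fun u v => A v u ≠ 0) i j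

/-- `σ` is the diagonal of a gauge transformation: each entry is `±1`. -/
def IsGauge {n : ℕ} (σ : Fin n → ℝ) : Prop := ∀ i, σ i = 1 ∨ σ i = -1

/-- Structural balance: there is a gauge transformation `D = diag σ` with all entries
of `D·A·D` (entrywise `σ i * A i j * σ j`) nonnegative. -/
def StructBalanced {n : ℕ} (A : Matrix (Fin n) (Fin n) ℝ) : Prop :=
  ∃ σ : Fin n → ℝ, IsGauge σ ∧ ∀ i j, 0 ≤ σ i * A i j * σ j

/-- Improved Laplacian potential function
`Φ_e(x) = Σ_i Σ_j det(L̄_ii)·|a_ij|·(x_i − sgn(a_ij)·x_j)²`. -/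
noncomputable def PhiE {n : ℕ} (A : Matrix (Fin n) (Fin n) ℝ) (x : Fin n → ℝ) : ℝ :=
  ∑ i, ∑ j, minorDet A i * |A i j| * (x i - Real.sign (A i j) * x j) ^ 2

lemma inDeg_pos {n : ℕ} (hn : 2 ≤ n) (A : Matrix (Fin n) (Fin n) ℝ)
    (hsc : StronglyConnected A) (k : Fin n) : 0 < inDeg A k := by
  obtain ⟨j, hj⟩ := Fintype.exists_ne_of_one_lt_card (by rw [Fintype.card_fin]; omega) k
  have h := hsc j k hj
  rw [Relation.TransGen.tail'_iff] at h
  obtain ⟨p, -, hp⟩ := h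
  have h1 : |A k p| ≤ inDeg A k := by
    unfold inDeg
    exact Finset.single_le_sum (f := fun j => |A k j|) (fun j _ => abs_nonneg _)
      (Finset.mem_univ p)
  have := abs_pos.mpr hp
  linarith

lemma minorDet_pos {n : ℕ} (hn : 2 ≤ n) (A : Matrix (Fin n) (Fin n) ℝ)
    (hsc : StronglyConnected A) (i : Fin n) : 0 < minorDet A i := by
  classical
  set S := {j : Fin n // j ≠ i} with hS
  set Mt : ℝ → Matrix S S ℝ := fun t =>
    Matrix.of fun k j : S => (if k = j then inDeg A k.1 else 0) - t * |A k.1 j.1| with hMt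
  -- the sum over S of row k of |A| is inDeg minus the i-entry
  have hsplit : ∀ k : Fin n, (∑ j : S, |A k j.1|) + |A k i| = inDeg A k := by
    intro k
    have h1 : (∑ j : S, |A k j.1|) = ∑ j ∈ Finset.univ.erase i, |A k j| := by
      rw [Finset.sum_subtype (Finset.univ.erase i)
        (fun j => Finset.mem_erase.trans (and_iff_left (Finset.mem_univ j))) (fun j => |A k j|)]
    rw [h1, Finset.sum_erase_add _ _ (Finset.mem_univ i)]
    rfl
  have hne : (Finset.univ : Finset S).Nonempty := by
    obtain ⟨j, hj⟩ := Fintype.exists_ne_of_one_lt_card (by rw [Fintype.card_fin]; omega) i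
    exact ⟨⟨j, hj⟩, Finset.mem_univ _⟩
  -- kernel triviality for t ∈ [0,1]
  have hker : ∀ t : ℝ, 0 ≤ t → t ≤ 1 → ∀ x : S → ℝ, (Mt t).mulVec x = 0 → x = 0 := by
    intro t ht0 ht1 x hx
    by_contra hx0
    set m : ℝ := Finset.univ.sup' hne (fun j : S => |x j|) with hm
    have hle : ∀ j : S, |x j| ≤ m :=
      fun j => Finset.le_sup' (fun j : S => |x j|) (Finset.mem_univ j)
    have hmpos : 0 < m := by
      obtain ⟨j, hj⟩ := Function.ne_iff.mp hx0
      exact lt_of_lt_of_le (abs_pos.mpr hj) (hle j)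
    -- the row equation
    have heq : ∀ k : S, inDeg A k.1 * x k = t * ∑ j : S, |A k.1 j.1| * x j := by
      intro k
      have h0 := congrFun hx k
      simp only [Matrix.mulVec, dotProduct, hMt, Matrix.of_apply, Pi.zero_apply] at h0
      rw [Finset.sum_congr rfl (fun j _ => sub_mul _ _ _ : ∀ j ∈ Finset.univ, _),
        Finset.sum_sub_distrib] at h0
      have h2 : (∑ j : S, (if k = j then inDeg A k.1 else 0) * x j) = inDeg A k.1 * x k := by
        rw [Finset.sum_congr rfl (fun j _ => by rw [ite_mul, zero_mul])]
        rw [Finset.sum_eq_single k (fun j _ hj => if_neg (Ne.symm hj)) (by simp)]; simp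
      rw [h2] at h0
      have h3 : (∑ j : S, t * |A k.1 j.1| * x j) = t * ∑ j : S, |A k.1 j.1| * x j := by
        rw [Finset.mul_sum]; exact Finset.sum_congr rfl (fun j _ => by ring)
      rw [h3] at h0
      linarith
    -- basic estimate
    have hest : ∀ k : S, |x k| = m →
        inDeg A k.1 * m ≤ t * ∑ j : S, |A k.1 j.1| * |x j| := by
      intro k hk
      have := heq k
      calc inDeg A k.1 * m = |inDeg A k.1 * x k| := by
            rw [abs_mul, abs_of_nonneg (inDeg_pos hn A hsc k.1).le, hk]
        _ = |t * ∑ j : S, |A k.1 j.1| * x j| := by rw [this]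
        _ = t * |∑ j : S, |A k.1 j.1| * x j| := by rw [abs_mul, abs_of_nonneg ht0]
        _ ≤ t * ∑ j : S, |A k.1 j.1| * |x j| := by
            refine mul_le_mul_of_nonneg_left ?_ ht0
            refine (Finset.abs_sum_le_sum_abs _ _).trans (le_of_eq ?_)
            exact Finset.sum_congr rfl (fun j _ => by rw [abs_mul, abs_abs])
    have hbound : ∀ k : S, (∑ j : S, |A k.1 j.1| * |x j|) ≤ (∑ j : S, |A k.1 j.1|) * m := by
      intro k
      rw [Finset.sum_mul]
      exact Finset.sum_le_sum (fun j _ => mul_le_mul_of_nonneg_left (hle j) (abs_nonneg _))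
    have hrow_le : ∀ k : S, (∑ j : S, |A k.1 j.1|) ≤ inDeg A k.1 := by
      intro k
      have := hsplit k.1
      have := abs_nonneg (A k.1 i)
      linarith
    obtain ⟨k0, -, hk0⟩ := Finset.exists_mem_eq_sup' hne (fun j : S => |x j|)
    rcases lt_or_eq_of_le ht1 with htlt | hteq
    · -- t < 1 : immediate contradiction
      have h1 := hest k0 hk0.symm
      have h2 := hbound k0
      have h3 := hrow_le k0
      have hd := inDeg_pos hn A hsc k0.1
      have hDm : 0 < inDeg A k0.1 * m := mul_pos hd hmpos
      nlinarith [mul_le_mul_of_nonneg_left h2 ht0,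
        mul_le_mul_of_nonneg_left (mul_le_mul_of_nonneg_right h3 hmpos.le) ht0]
    · -- t = 1 : propagation argument
      subst hteq
      -- core: if |x k| = m then A k i = 0 and all row-neighbours attain the max
      have core : ∀ k : S, |x k| = m →
          A k.1 i = 0 ∧ ∀ j : S, A k.1 j.1 ≠ 0 → |x j| = m := by
        intro k hk
        have h1 := hest k hk
        rw [one_mul] at h1
        have h2 := hbound k
        have h3 := hsplit k.1
        have hAki : A k.1 i = 0 := by
          have : |A k.1 i| * m ≤ 0 := by nlinarith
          have := abs_nonneg (A k.1 i)
          have habs : |A k.1 i| = 0 := by nlinarith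
          exact abs_eq_zero.mp habs
        refine ⟨hAki, ?_⟩
        have hsumeq : (∑ j : S, |A k.1 j.1| * (m - |x j|)) = 0 := by
          have hexp : (∑ j : S, |A k.1 j.1| * (m - |x j|))
              = (∑ j : S, |A k.1 j.1|) * m - ∑ j : S, |A k.1 j.1| * |x j| := by
            rw [Finset.sum_mul, ← Finset.sum_sub_distrib]
            exact Finset.sum_congr rfl (fun j _ => by ring)
          have hAki' : |A k.1 i| = 0 := by rw [hAki]; exact abs_zero
          have hge : 0 ≤ ∑ j : S, |A k.1 j.1| * (m - |x j|) :=
            Finset.sum_nonneg fun j _ => mul_nonneg (abs_nonneg _) (by linarith [hle j])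
          nlinarith
        intro j hj
        have := (Finset.sum_eq_zero_iff_of_nonneg
          (fun j _ => mul_nonneg (abs_nonneg _) (by linarith [hle j]))).mp hsumeq j
          (Finset.mem_univ j)
        have habsj : 0 < |A k.1 j.1| := abs_pos.mpr hj
        have : m - |x j| = 0 := by
          rcases mul_eq_zero.mp this with h | h
          · exact absurd h habsj.ne'
          · exact h
        linarith
      -- no node reachable from i attains the max
      have hreach : ∀ k : Fin n, Relation.TransGen (fun u v => A v u ≠ 0) i k →
          ∀ hk : k ≠ i, |x ⟨k, hk⟩| ≠ m := by
        intro k hk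
        induction hk with
        | single h => intro hki habs; exact h (core ⟨_, hki⟩ habs).1
        | @tail p k' hpath hstep ih =>
          intro hki habs
          obtain ⟨hA0, hnbr⟩ := core ⟨_, hki⟩ habs
          by_cases hp : p = i
          · exact hstep (by rw [hp]; exact hA0)
          · exact ih hp (hnbr ⟨p, hp⟩ hstep)
      exact hreach k0.1 (hsc i k0.1 (Ne.symm k0.2)) k0.2 hk0.symm
  -- determinant of Mt t is nonzero on [0,1]
  have hdet_ne : ∀ t : ℝ, 0 ≤ t → t ≤ 1 → (Mt t).det ≠ 0 := by
    intro t ht0 ht1 h0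
    obtain ⟨v, hv, hv0⟩ := (Matrix.exists_mulVec_eq_zero_iff).mpr h0
    exact hv (hker t ht0 ht1 v hv0)
  -- continuity
  have hcont : Continuous fun t : ℝ => (Mt t).det := by
    refine Continuous.matrix_det ?_
    refine continuous_matrix (fun k j => ?_)
    simp only [hMt, Matrix.of_apply]
    fun_prop
  -- value at 0
  have hdet0 : 0 < (Mt 0).det := by
    have h0 : Mt 0 = Matrix.diagonal (fun k : S => inDeg A k.1) := by
      ext k j
      simp [hMt, Matrix.diagonal_apply]
    rw [h0, Matrix.det_diagonal]
    exact Finset.prod_pos fun k _ => inDeg_pos hn A hsc k.1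
  -- value at 1 equals minorDet
  have hdet1 : (Mt 1).det = minorDet A i := by
    congr 1
    ext k j
    simp only [hMt, Matrix.of_apply, Matrix.submatrix_apply, lapBar, Matrix.sub_apply,
      Matrix.diagonal_apply, Matrix.of_apply, one_mul]
    by_cases h : k = j
    · simp [h]
    · rw [if_neg h, if_neg (fun hh => h (Subtype.ext hh))]
  -- IVT
  rw [← hdet1]
  by_contra hle
  push_neg at hle
  have hlt : (Mt 1).det < 0 := lt_of_le_of_ne hle (hdet_ne 1 zero_le_one le_rfl)
  have := intermediate_value_Icc' (by norm_num : (0:ℝ) ≤ 1) hcont.continuousOn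
  have h0mem : (0:ℝ) ∈ Set.Icc ((fun t : ℝ => (Mt t).det) 1) ((fun t : ℝ => (Mt t).det) 0) :=
    ⟨hlt.le, hdet0.le⟩
  obtain ⟨c, hc, hc0⟩ := this h0mem
  exact hdet_ne c hc.1 hc.2 hc0

lemma gauge_sq {n : ℕ} {σ : Fin n → ℝ} (h : IsGauge σ) (i : Fin n) : σ i * σ i = 1 := by
  rcases h i with h1 | h1 <;> rw [h1] <;> norm_num

lemma mirrorAdj_apply {n : ℕ} (A : Matrix (Fin n) (Fin n) ℝ) (i j : Fin n) :
    mirrorAdj A i j = (1/2) * (minorDet A i * A i j + A j i * minorDet A j) := by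
  simp [mirrorAdj, Wmat, Matrix.diagonal_mul, Matrix.mul_diagonal, Matrix.transpose_apply,
    Matrix.add_apply, Matrix.smul_apply, smul_eq_mul]

/-- the mirror signed graph has the same sign pattern as `G`:
it is structurally balanced iff `G` is. -/
theorem mirror_structurally_balanced_iff (n : ℕ) (hn : 2 ≤ n)
    (A : Matrix (Fin n) (Fin n) ℝ)
    (hdiag : ∀ i, A i i = 0) (hdigon : ∀ i j, 0 ≤ A i j * A j i)
    (hsc : StronglyConnected A) :
    StructBalanced (mirrorAdj A) ↔ StructBalanced A := by
  have hw : ∀ i, 0 < minorDet A i := minorDet_pos hn A hsc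
  constructor
  · rintro ⟨σ, hg, hσ⟩
    refine ⟨σ, hg, fun i j => ?_⟩
    set u := σ i * A i j * σ j with hu
    set v := σ i * A j i * σ j with hv
    have hi := gauge_sq hg i
    have hj := gauge_sq hg j
    have hkey : u * v = A i j * A j i := by
      calc u * v = (σ i * σ i) * ((σ j * σ j) * (A i j * A j i)) := by rw [hu, hv]; ring
        _ = A i j * A j i := by rw [hi, hj]; ring
    have huv : 0 ≤ u * v := hkey ▸ hdigon i j
    have h1 := hσ i j
    have h2 : σ i * mirrorAdj A i j * σ j
        = (1/2) * (minorDet A i * u + minorDet A j * v) := by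
      rw [mirrorAdj_apply, hu, hv]; ring
    rw [h2] at h1
    rcases le_or_gt 0 u with h | h
    · exact h
    · exfalso
      have hvle : v ≤ 0 := by
        by_contra hv'
        push_neg at hv'
        exact absurd huv (not_le.mpr (mul_neg_of_neg_of_pos h hv'))
      have h3 : minorDet A i * u < 0 := mul_neg_of_pos_of_neg (hw i) h
      have h4 : minorDet A j * v ≤ 0 := mul_nonpos_iff.mpr (Or.inl ⟨(hw j).le, hvle⟩)
      linarith
  · rintro ⟨σ, hg, hσ⟩
    refine ⟨σ, hg, fun i j => ?_⟩
    have h2 : σ i * mirrorAdj A i j * σ j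
        = (1/2) * (minorDet A i * (σ i * A i j * σ j)
          + minorDet A j * (σ j * A j i * σ i)) := by
      rw [mirrorAdj_apply]; ring
    rw [h2]
    have h3 := mul_nonneg (hw i).le (hσ i j)
    have h4 := mul_nonneg (hw j).le (hσ j i)
    linarith
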